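/- Consider a weighted graph $G = (V,E)$ with all edge costs finite and distinct, such that each vertex has only finitely many incident edges of cost below any finite threshold, and such that $G$ contains no infinite descending path (no infinite sequence of adjacent edges with strictly decreasing costs). Then $G$ has a unique stable matching. -/

import Mathlib

open Classical

/-- `M : V → Option V` is a matching of the graph `G`: matched pairs are adjacent and
the partner relation is symmetric. -/
def IsGraphMatching {V : Type*} (G : SimpleGraph V) (M : V → Option V) : Prop :=
  ∀ u v : V, M u = some v → G.Adj u v ∧ M v = some u

/-- The matching cost of a vertex: the cost of its matching edge, `⊤` if unmatched. -/
noncomputable def matchingCost {V : Type*} (τ : V → V → ℝ) (M : V → Option V) (v : V) :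
    EReal :=
  (M v).elim ⊤ (fun u => (τ v u : EReal))

/-- A matching is stable if no non-matching edge is cheaper than both endpoint costs. -/
def IsStableMatching {V : Type*} (G : SimpleGraph V) (τ : V → V → ℝ)
    (M : V → Option V) : Prop :=
  IsGraphMatching G M ∧
    ∀ u v : V, G.Adj u v → M u ≠ some v →
      min (matchingCost τ M u) (matchingCost τ M v) < (τ u v : EReal)

/-- Auxiliary relation on oriented edges: `e'` is an edge adjacent to `e` of smaller cost. -/
def EdgeRel {V : Type*} (G : SimpleGraph V) (τ : V → V → ℝ) (e' e : V × V) : Prop :=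
  G.Adj e'.1 e'.2 ∧ τ e'.1 e'.2 < τ e.1 e.2 ∧
    (e'.1 = e.1 ∨ e'.1 = e.2 ∨ e'.2 = e.1 ∨ e'.2 = e.2)

/-- An edge is good (belongs to the canonical stable matching) iff it is an edge and no
cheaper adjacent edge is good. -/
noncomputable def goodEdge {V : Type*} (G : SimpleGraph V) (τ : V → V → ℝ)
    (hwf : WellFounded (EdgeRel G τ)) : V × V → Prop :=
  hwf.fix (fun e ih => G.Adj e.1 e.2 ∧ ∀ e' (h : EdgeRel G τ e' e), ¬ ih e' h)

theorem goodEdge_iff {V : Type*} (G : SimpleGraph V) (τ : V → V → ℝ)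
    (hwf : WellFounded (EdgeRel G τ)) (e : V × V) :
    goodEdge G τ hwf e ↔
      (G.Adj e.1 e.2 ∧ ∀ e', EdgeRel G τ e' e → ¬ goodEdge G τ hwf e') := by
  unfold goodEdge
  rw [WellFounded.fix_eq]

/-- A weighted graph with symmetric, distinct edge costs, locally finite cost levels,
and no infinite descending path has a unique stable matching. -/
theorem stmt11 {V : Type*} (G : SimpleGraph V) (τ : V → V → ℝ)
    (hsymm : ∀ u v, τ u v = τ v u)
    (hdistinct : ∀ u v u' v', G.Adj u v → G.Adj u' v' → τ u v = τ u' v' →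
      (u = u' ∧ v = v') ∨ (u = v' ∧ v = u'))
    (hlocfin : ∀ v : V, ∀ s : ℝ, {u : V | G.Adj v u ∧ τ v u < s}.Finite)
    (hnodesc : ¬ ∃ p : ℕ → V, (∀ n, G.Adj (p n) (p (n + 1))) ∧
      ∀ n, τ (p (n + 1)) (p (n + 2)) < τ (p n) (p (n + 1))) :
    ∃! M : V → Option V, IsStableMatching G τ M := by
  -- Step 1: the edge relation is well-founded
  have hwf : WellFounded (EdgeRel G τ) := by
    constructor
    intro e₀
    by_contra he₀
    -- the set of cheaper adjacent edges is finite
    have hfin : ∀ e : V × V, {e' : V × V | EdgeRel G τ e' e}.Finite := by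
      intro e
      have h1 := hlocfin e.1 (τ e.1 e.2)
      have h2 := hlocfin e.2 (τ e.1 e.2)
      apply Set.Finite.subset
        (((h1.image (Prod.mk e.1)).union (h1.image (fun u => (u, e.1)))).union
          ((h2.image (Prod.mk e.2)).union (h2.image (fun u => (u, e.2)))))
      rintro ⟨a, b⟩ ⟨hadj, hlt, hsh⟩
      dsimp only at hadj hlt hsh
      rcases hsh with h | h | h | h
      · subst h
        exact Or.inl (Or.inl ⟨b, ⟨hadj, hlt⟩, rfl⟩)
      · subst h
        exact Or.inr (Or.inl ⟨b, ⟨hadj, hlt⟩, rfl⟩)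
      · subst h
        exact Or.inl (Or.inr ⟨a, ⟨hadj.symm, by rw [← hsymm]; exact hlt⟩, rfl⟩)
      · subst h
        exact Or.inr (Or.inr ⟨a, ⟨hadj.symm, by rw [← hsymm]; exact hlt⟩, rfl⟩)
    -- every non-accessible edge has a cheapest non-accessible predecessor
    have key : ∀ e : V × V, ¬ Acc (EdgeRel G τ) e →
        ∃ e', (EdgeRel G τ e' e ∧ ¬ Acc (EdgeRel G τ) e') ∧
          ∀ e'', EdgeRel G τ e'' e → ¬ Acc (EdgeRel G τ) e'' →
            τ e'.1 e'.2 ≤ τ e''.1 e''.2 := by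
      intro e he
      have hne : {e' : V × V | EdgeRel G τ e' e ∧ ¬ Acc (EdgeRel G τ) e'}.Nonempty := by
        by_contra hcon
        apply he
        constructor
        intro y hy
        by_contra hy'
        exact hcon ⟨y, hy, hy'⟩
      have hfin' : {e' : V × V | EdgeRel G τ e' e ∧ ¬ Acc (EdgeRel G τ) e'}.Finite :=
        (hfin e).subset (fun x hx => hx.1)
      obtain ⟨a, ha, hmin⟩ := hfin'.toFinset.exists_min_image (fun e' => τ e'.1 e'.2)
        (by rwa [Set.Finite.toFinset_nonempty])
      rw [Set.Finite.mem_toFinset] at ha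
      refine ⟨a, ha, fun e'' h1 h2 => hmin e'' ?_⟩
      rw [Set.Finite.mem_toFinset]
      exact ⟨h1, h2⟩
    choose nxt hnxt hmin using key
    -- the descending chain of non-accessible edges
    let g : {e : V × V // ¬ Acc (EdgeRel G τ) e} → {e : V × V // ¬ Acc (EdgeRel G τ) e} :=
      fun x => ⟨nxt x.1 x.2, (hnxt x.1 x.2).2⟩
    let f : ℕ → {e : V × V // ¬ Acc (EdgeRel G τ) e} := fun n => g^[n] ⟨e₀, he₀⟩
    have hfs : ∀ n, f (n + 1) = g (f n) := fun n => Function.iterate_succ_apply' g n _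
    have hstep : ∀ n, EdgeRel G τ (f (n + 1)).1 (f n).1 := by
      intro n; rw [hfs n]; exact (hnxt (f n).1 (f n).2).1
    have hmin' : ∀ n, ∀ e'', EdgeRel G τ e'' (f n).1 → ¬ Acc (EdgeRel G τ) e'' →
        τ (f (n + 1)).1.1 (f (n + 1)).1.2 ≤ τ e''.1 e''.2 := by
      intro n; rw [hfs n]; exact hmin (f n).1 (f n).2
    -- common vertices give a descending path
    have hcom : ∀ n, ∃ x : V, (x = (f n).1.1 ∨ x = (f n).1.2) ∧
        (x = (f (n + 1)).1.1 ∨ x = (f (n + 1)).1.2) := by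
      intro n
      rcases (hstep n).2.2 with h | h | h | h
      · exact ⟨(f (n + 1)).1.1, Or.inl h, Or.inl rfl⟩
      · exact ⟨(f (n + 1)).1.1, Or.inr h, Or.inl rfl⟩
      · exact ⟨(f (n + 1)).1.2, Or.inl h, Or.inr rfl⟩
      · exact ⟨(f (n + 1)).1.2, Or.inr h, Or.inr rfl⟩
    let p : ℕ → V := fun n => (hcom n).choose
    have hp1 : ∀ n, p n = (f n).1.1 ∨ p n = (f n).1.2 := fun n => (hcom n).choose_spec.1
    have hp2 : ∀ n, p n = (f (n + 1)).1.1 ∨ p n = (f (n + 1)).1.2 :=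
      fun n => (hcom n).choose_spec.2
    have hne2 : ∀ n, p n ≠ p (n + 1) := by
      intro n heq
      have hr2 : EdgeRel G τ (f (n + 2)).1 (f n).1 := by
        refine ⟨(hstep (n + 1)).1, lt_trans (hstep (n + 1)).2.1 (hstep n).2.1, ?_⟩
        rcases hp2 (n + 1) with h | h <;> rcases hp1 n with h' | h'
        · exact Or.inl (by rw [← h, ← heq, h'])
        · exact Or.inr (Or.inl (by rw [← h, ← heq, h']))
        · exact Or.inr (Or.inr (Or.inl (by rw [← h, ← heq, h'])))
        · exact Or.inr (Or.inr (Or.inr (by rw [← h, ← heq, h'])))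
      have hle := hmin' n (f (n + 2)).1 hr2 (f (n + 2)).2
      exact absurd hle (not_le.2 (hstep (n + 1)).2.1)
    have hedge : ∀ n, (p n = (f (n + 1)).1.1 ∧ p (n + 1) = (f (n + 1)).1.2) ∨
        (p n = (f (n + 1)).1.2 ∧ p (n + 1) = (f (n + 1)).1.1) := by
      intro n
      rcases hp2 n with h | h <;> rcases hp1 (n + 1) with h' | h'
      · exact absurd (h.trans h'.symm) (hne2 n)
      · exact Or.inl ⟨h, h'⟩
      · exact Or.inr ⟨h, h'⟩
      · exact absurd (h.trans h'.symm) (hne2 n)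
    have hpadj : ∀ n, G.Adj (p n) (p (n + 1)) := by
      intro n
      rcases hedge n with ⟨h1, h2⟩ | ⟨h1, h2⟩
      · rw [h1, h2]; exact (hstep n).1
      · rw [h1, h2]; exact (hstep n).1.symm
    have hpcost : ∀ n, τ (p n) (p (n + 1)) = τ (f (n + 1)).1.1 (f (n + 1)).1.2 := by
      intro n
      rcases hedge n with ⟨h1, h2⟩ | ⟨h1, h2⟩
      · rw [h1, h2]
      · rw [h1, h2, hsymm]
    exact hnodesc ⟨p, hpadj, fun n => by
      rw [hpcost n, hpcost (n + 1)]; exact (hstep (n + 1)).2.1⟩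
  -- symmetry of the relation under swapping either argument
  have hrswap_l : ∀ (e' : V × V) (a b : V), EdgeRel G τ e' (a, b) ↔ EdgeRel G τ e' (b, a) := by
    intro e' a b
    unfold EdgeRel
    dsimp only
    rw [hsymm b a]
    tauto
  have hrswap_r : ∀ (a b : V) (e : V × V), EdgeRel G τ (a, b) e ↔ EdgeRel G τ (b, a) e := by
    intro a b e
    unfold EdgeRel
    dsimp only
    rw [hsymm b a, G.adj_comm]
    tauto
  -- goodness is orientation independent
  have hswap : ∀ a b : V, goodEdge G τ hwf (a, b) ↔ goodEdge G τ hwf (b, a) := by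
    intro a b
    rw [goodEdge_iff, goodEdge_iff]
    dsimp only
    constructor
    · rintro ⟨ha, h⟩
      exact ⟨ha.symm, fun e' he' => h e' ((hrswap_l e' a b).2 he')⟩
    · rintro ⟨ha, h⟩
      exact ⟨ha.symm, fun e' he' => h e' ((hrswap_l e' a b).1 he')⟩
  have hgadj : ∀ e : V × V, goodEdge G τ hwf e → G.Adj e.1 e.2 := by
    intro e he
    exact ((goodEdge_iff G τ hwf e).1 he).1
  -- uniqueness of the good partner
  have huniq : ∀ v u u' : V, goodEdge G τ hwf (v, u) → goodEdge G τ hwf (v, u') → u = u' := by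
    intro v u u' hu hu'
    have hadj : G.Adj v u := hgadj _ hu
    have hadj' : G.Adj v u' := hgadj _ hu'
    rcases lt_trichotomy (τ v u) (τ v u') with hlt | heq | hlt
    · exfalso
      have : EdgeRel G τ (v, u) (v, u') := ⟨hadj, hlt, Or.inl rfl⟩
      exact ((goodEdge_iff G τ hwf (v, u')).1 hu').2 (v, u) this hu
    · rcases hdistinct v u v u' hadj hadj' heq with ⟨_, h⟩ | ⟨h, _⟩
      · exact h
      · exact absurd h (G.ne_of_adj hadj')
    · exfalso
      have : EdgeRel G τ (v, u') (v, u) := ⟨hadj', hlt, Or.inl rfl⟩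
      exact ((goodEdge_iff G τ hwf (v, u)).1 hu).2 (v, u') this hu'
  -- the canonical matching
  let M : V → Option V := fun v =>
    if h : ∃ u, goodEdge G τ hwf (v, u) then some h.choose else none
  have hM_some : ∀ v u : V, M v = some u ↔ goodEdge G τ hwf (v, u) := by
    intro v u
    by_cases hex : ∃ w, goodEdge G τ hwf (v, w)
    · have hMv : M v = some hex.choose := dif_pos hex
      rw [hMv]
      constructor
      · intro h
        injection h with h
        rw [← h]
        exact hex.choose_spec
      · intro hg
        exact congrArg some (huniq v _ _ hex.choose_spec hg)
    · have hMv : M v = none := dif_neg hex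
      rw [hMv]
      exact iff_of_false (by simp) (fun hg => hex ⟨u, hg⟩)
  have hmatch : IsGraphMatching G M := by
    intro u v huv
    have hg : goodEdge G τ hwf (u, v) := (hM_some u v).1 huv
    exact ⟨hgadj _ hg, (hM_some v u).2 ((hswap u v).1 hg)⟩
  have hstable : IsStableMatching G τ M := by
    refine ⟨hmatch, ?_⟩
    intro u v hadj hne
    have hng : ¬ goodEdge G τ hwf (u, v) := fun hg => hne ((hM_some u v).2 hg)
    rw [goodEdge_iff] at hng
    push_neg at hng
    obtain ⟨e', he', hge'⟩ := hng hadj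
    obtain ⟨a, b⟩ := e'
    obtain ⟨hab, hlt, hsh⟩ := he'
    dsimp only at hab hlt hsh
    have hMa : M a = some b := (hM_some a b).2 hge'
    have hMb : M b = some a := (hM_some b a).2 ((hswap a b).1 hge')
    rcases hsh with h | h | h | h
    · subst h
      refine min_lt_iff.2 (Or.inl ?_)
      have : matchingCost τ M a = ((τ a b : ℝ) : EReal) := by simp [matchingCost, hMa]
      rw [this]
      exact_mod_cast hlt
    · subst h
      refine min_lt_iff.2 (Or.inr ?_)
      have : matchingCost τ M a = ((τ a b : ℝ) : EReal) := by simp [matchingCost, hMa]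
      rw [this]
      exact_mod_cast hlt
    · subst h
      refine min_lt_iff.2 (Or.inl ?_)
      have : matchingCost τ M b = ((τ b a : ℝ) : EReal) := by simp [matchingCost, hMb]
      rw [this, hsymm b a]
      exact_mod_cast hlt
    · subst h
      refine min_lt_iff.2 (Or.inr ?_)
      have : matchingCost τ M b = ((τ b a : ℝ) : EReal) := by simp [matchingCost, hMb]
      rw [this, hsymm b a]
      exact_mod_cast hlt
  refine ⟨M, hstable, ?_⟩
  intro M' hM'
  -- the key invariance: any stable matching agrees with goodness
  have key : ∀ e : V × V, G.Adj e.1 e.2 → (goodEdge G τ hwf e ↔ M' e.1 = some e.2) := by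
    intro e
    induction' hwf.apply e with e _ ih
    intro hadj
    constructor
    · intro hg
      by_contra hne
      have hmin := hM'.2 e.1 e.2 hadj hne
      rcases min_lt_iff.1 hmin with hlt | hlt
      · simp only [matchingCost] at hlt
        obtain ⟨w, hw⟩ : ∃ w, M' e.1 = some w := by
          cases hw : M' e.1 with
          | none => rw [hw] at hlt; simp at hlt
          | some w => exact ⟨w, rfl⟩
        rw [hw] at hlt
        simp only [Option.elim] at hlt
        have hltr : τ e.1 w < τ e.1 e.2 := by exact_mod_cast hlt
        have hadjw : G.Adj e.1 w := (hM'.1 e.1 w hw).1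
        have hrel : EdgeRel G τ (e.1, w) e := ⟨hadjw, hltr, Or.inl rfl⟩
        have hgw : goodEdge G τ hwf (e.1, w) := (ih (e.1, w) hrel hadjw).2 hw
        exact ((goodEdge_iff G τ hwf e).1 hg).2 (e.1, w) hrel hgw
      · simp only [matchingCost] at hlt
        obtain ⟨w, hw⟩ : ∃ w, M' e.2 = some w := by
          cases hw : M' e.2 with
          | none => rw [hw] at hlt; simp at hlt
          | some w => exact ⟨w, rfl⟩
        rw [hw] at hlt
        simp only [Option.elim] at hlt
        have hltr : τ e.2 w < τ e.1 e.2 := by exact_mod_cast hlt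
        have hadjw : G.Adj e.2 w := (hM'.1 e.2 w hw).1
        have hrel : EdgeRel G τ (e.2, w) e := ⟨hadjw, hltr, Or.inr (Or.inl rfl)⟩
        have hgw : goodEdge G τ hwf (e.2, w) := (ih (e.2, w) hrel hadjw).2 hw
        exact ((goodEdge_iff G τ hwf e).1 hg).2 (e.2, w) hrel hgw
    · intro hm
      by_contra hg
      rw [goodEdge_iff] at hg
      push_neg at hg
      obtain ⟨e', he', hge'⟩ := hg hadj
      have hm2 : M' e.2 = some e.1 := (hM'.1 e.1 e.2 hm).2
      obtain ⟨a, b⟩ := e'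
      obtain ⟨hab, hlt, hsh⟩ := he'
      dsimp only at hab hlt hsh
      have hM'a : M' a = some b :=
        (ih (a, b) ⟨hab, hlt, hsh⟩ hab).1 hge'
      have hM'b : M' b = some a := (hM'.1 a b hM'a).2
      rcases hsh with h | h | h | h
      · subst h
        rw [hm] at hM'a
        injection hM'a with h'
        rw [h'] at hlt
        exact absurd rfl (ne_of_lt hlt)
      · subst h
        rw [hm2] at hM'a
        injection hM'a with h'
        rw [h', hsymm] at hlt
        exact absurd rfl (ne_of_lt hlt)
      · subst h
        rw [hm] at hM'b
        injection hM'b with h'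
        rw [hsymm a e.1, h'] at hlt
        exact absurd rfl (ne_of_lt hlt)
      · subst h
        rw [hm2] at hM'b
        injection hM'b with h'
        rw [h', hsymm] at hlt
        exact absurd rfl (ne_of_lt hlt)
  funext v
  cases hMv : M v with
  | none =>
    cases hM'v : M' v with
    | none => rfl
    | some u =>
      exfalso
      have hadj : G.Adj v u := (hM'.1 v u hM'v).1
      have hg : goodEdge G τ hwf (v, u) := (key (v, u) hadj).2 hM'v
      rw [(hM_some v u).2 hg] at hMv
      exact Option.some_ne_none u hMv
  | some u =>
    have hg : goodEdge G τ hwf (v, u) := (hM_some v u).1 hMv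
    rw [(key (v, u) (hgadj _ hg)).1 hg]
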